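/- arXiv:2106.07375 — 5 statements merged into one kernel-verified Lean document; each statement's English description precedes it below -/
import Mathlib

section
/- For every positive integer N, the infinite product ∏_{k=0}^∞ Z(s+kN), with Z(s) = (s-2)(s-3)/((s-1)(s-4)), converges to Γ((s-1)/N)Γ((s-4)/N)/(Γ((s-2)/N)Γ((s-3)/N)) for complex s avoiding poles of the factors. -/
open Filter Finset Complex

lemma aux_alg (Ka Kb Kc Kd f Pa Pb Pc Pd : ℂ) (h : Ka * Kb = Kc * Kd)
    (hKc : Kc ≠ 0) (hKd : Kd ≠ 0) (hf : f ≠ 0) (hPa : Pa ≠ 0) (hPb : Pb ≠ 0)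
    (hPc : Pc ≠ 0) (hPd : Pd ≠ 0) :
    (Ka * f / Pa) * (Kb * f / Pb) / ((Kc * f / Pc) * (Kd * f / Pd)) =
      Pc * Pd / (Pa * Pb) := by
  field_simp
  linear_combination h

set_option maxHeartbeats 1000000 in
/-- `∏_{k=0}^∞ Z(s+kN)` converges to
`Γ((s-1)/N)Γ((s-4)/N)/(Γ((s-2)/N)Γ((s-3)/N))`. -/
theorem stmt_8 (N : ℕ) (hN : 0 < N) (s : ℂ)
    (hs : ∀ k : ℕ, s + k * N ≠ 1 ∧ s + k * N ≠ 2 ∧ s + k * N ≠ 3 ∧ s + k * N ≠ 4) :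
    Tendsto (fun K : ℕ => ∏ k ∈ Finset.range (K + 1),
        ((s + k * N - 2) * (s + k * N - 3) / ((s + k * N - 1) * (s + k * N - 4))))
      atTop
      (nhds (Complex.Gamma ((s - 1) / N) * Complex.Gamma ((s - 4) / N) /
        (Complex.Gamma ((s - 2) / N) * Complex.Gamma ((s - 3) / N)))) := by
  have hN0 : (N : ℂ) ≠ 0 := Nat.cast_ne_zero.mpr hN.ne'
  set a := (s - 1) / N with ha_def
  set b := (s - 4) / N with hb_def
  set c := (s - 2) / N with hc_def
  set d := (s - 3) / N with hd_def
  have key : ∀ (t : ℂ) (z : ℂ), t = (s - z) / N → (∀ k : ℕ, s + k * N ≠ z) →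
      ∀ k : ℕ, t + k ≠ 0 := by
    intro t z ht hz k h
    apply hz k
    have h1 : s + k * N - z = (t + k) * N := by rw [ht]; field_simp; ring
    have h2 : s + k * N - z = 0 := by rw [h1, h, zero_mul]
    linear_combination h2
  have ha : ∀ k : ℕ, a + k ≠ 0 := key a 1 ha_def fun k => (hs k).1
  have hb : ∀ k : ℕ, b + k ≠ 0 := key b 4 hb_def fun k => (hs k).2.2.2
  have hc : ∀ k : ℕ, c + k ≠ 0 := key c 2 hc_def fun k => (hs k).2.1
  have hd : ∀ k : ℕ, d + k ≠ 0 := key d 3 hd_def fun k => (hs k).2.2.1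
  have hΓc : Complex.Gamma c ≠ 0 :=
    Complex.Gamma_ne_zero fun m h => hc m (by rw [h]; ring)
  have hΓd : Complex.Gamma d ≠ 0 :=
    Complex.Gamma_ne_zero fun m h => hd m (by rw [h]; ring)
  have hlim : Tendsto (fun K : ℕ => Complex.GammaSeq a K * Complex.GammaSeq b K /
      (Complex.GammaSeq c K * Complex.GammaSeq d K)) atTop
      (nhds (Complex.Gamma a * Complex.Gamma b / (Complex.Gamma c * Complex.Gamma d))) :=
    (((Complex.GammaSeq_tendsto_Gamma a).mul (Complex.GammaSeq_tendsto_Gamma b)).div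
      ((Complex.GammaSeq_tendsto_Gamma c).mul (Complex.GammaSeq_tendsto_Gamma d))
      (mul_ne_zero hΓc hΓd))
  refine hlim.congr' ?_
  filter_upwards [eventually_ge_atTop 1] with K hK
  have hK0 : (K : ℂ) ≠ 0 := Nat.cast_ne_zero.mpr (by omega)
  have hfac : ((Nat.factorial K : ℕ) : ℂ) ≠ 0 := Nat.cast_ne_zero.mpr K.factorial_ne_zero
  have hprodc : ∏ j ∈ Finset.range (K + 1), (c + j) ≠ 0 :=
    Finset.prod_ne_zero_iff.mpr fun j _ => hc j
  have hprodd : ∏ j ∈ Finset.range (K + 1), (d + j) ≠ 0 :=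
    Finset.prod_ne_zero_iff.mpr fun j _ => hd j
  have hproda : ∏ j ∈ Finset.range (K + 1), (a + j) ≠ 0 :=
    Finset.prod_ne_zero_iff.mpr fun j _ => ha j
  have hprodb : ∏ j ∈ Finset.range (K + 1), (b + j) ≠ 0 :=
    Finset.prod_ne_zero_iff.mpr fun j _ => hb j
  have hpow : (K : ℂ) ^ a * (K : ℂ) ^ b = (K : ℂ) ^ c * (K : ℂ) ^ d := by
    rw [← Complex.cpow_add _ _ hK0, ← Complex.cpow_add _ _ hK0]
    congr 1
    rw [ha_def, hb_def, hc_def, hd_def]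
    field_simp
    ring
  have hfactor : ∀ k : ℕ,
      (s + k * N - 2) * (s + k * N - 3) / ((s + k * N - 1) * (s + k * N - 4)) =
      (c + k) * (d + k) / ((a + k) * (b + k)) := by
    intro k
    have e1 : s + k * N - 1 = (a + k) * N := by rw [ha_def]; field_simp ; ring
    have e2 : s + k * N - 2 = (c + k) * N := by rw [hc_def]; field_simp ; ring
    have e3 : s + k * N - 3 = (d + k) * N := by rw [hd_def]; field_simp ; ring
    have e4 : s + k * N - 4 = (b + k) * N := by rw [hb_def]; field_simp ; ring
    rw [e1, e2, e3, e4]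
    rw [div_eq_div_iff (by exact mul_ne_zero (mul_ne_zero (ha k) hN0) (mul_ne_zero (hb k) hN0))
      (mul_ne_zero (ha k) (hb k))]
    ring
  calc Complex.GammaSeq a K * Complex.GammaSeq b K /
      (Complex.GammaSeq c K * Complex.GammaSeq d K)
      = (∏ j ∈ Finset.range (K + 1), (c + j)) * (∏ j ∈ Finset.range (K + 1), (d + j)) /
        ((∏ j ∈ Finset.range (K + 1), (a + j)) * (∏ j ∈ Finset.range (K + 1), (b + j))) := by
        have hKc : (K:ℂ) ^ c ≠ 0 := by simp [Complex.cpow_eq_zero_iff, hK0]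
        have hKd : (K:ℂ) ^ d ≠ 0 := by simp [Complex.cpow_eq_zero_iff, hK0]
        simp only [Complex.GammaSeq]
        exact aux_alg _ _ _ _ _ _ _ _ _ hpow hKc hKd hfac hproda hprodb hprodc hprodd
    _ = ∏ k ∈ Finset.range (K + 1),
        ((s + k * N - 2) * (s + k * N - 3) / ((s + k * N - 1) * (s + k * N - 4))) := by
        rw [← Finset.prod_mul_distrib, ← Finset.prod_mul_distrib, ← Finset.prod_div_distrib]
        exact Finset.prod_congr rfl fun k _ => (hfactor k).symm
end

section
/- For a positive integer N, the function Γ((s-1)/N)Γ((s-4)/N)/(Γ((s-2)/N)Γ((s-3)/N)) of the complex variable s is a rational function if and only if N = 1 or N = 2. -/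
open Complex Filter Topology

lemma ne_neg_nat_of_im {z : ℂ} (h : z.im ≠ 0) (k : ℕ) : z ≠ -(k : ℂ) := by
  intro hz
  apply h
  rw [hz]
  simp

lemma ne_neg_nat_of_re_pos {z : ℂ} (h : 0 < z.re) (k : ℕ) : z ≠ -(k : ℂ) := by
  intro hz
  rw [hz] at h
  simp only [neg_re, natCast_re] at h
  have : (0:ℝ) ≤ (k:ℝ) := k.cast_nonneg
  linarith

lemma continuousAt_Gamma' {z : ℂ} (h : ∀ k : ℕ, z ≠ -(k : ℂ)) :
    ContinuousAt Complex.Gamma z :=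
  (Complex.differentiableAt_Gamma z h).continuousAt

lemma gamma_norm_tendsto (m : ℕ) :
    Tendsto (fun z : ℂ => ‖Complex.Gamma z‖) (𝓝[≠] (-(m : ℂ))) atTop := by
  induction m with
  | zero =>
    have hev : ∀ᶠ z : ℂ in 𝓝[≠] (-((0:ℕ) : ℂ)), ‖z‖⁻¹ * ‖Complex.Gamma (z + 1)‖ = ‖Complex.Gamma z‖ := by
      filter_upwards [self_mem_nhdsWithin] with z hz
      have hz' : z ≠ 0 := by simpa using hz
      rw [Complex.Gamma_add_one z hz', norm_mul, ← mul_assoc, inv_mul_cancel₀ (by simpa using hz'),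
        one_mul]
    have t1 : Tendsto (fun z : ℂ => ‖z‖⁻¹) (𝓝[≠] (-((0:ℕ):ℂ))) atTop := by
      apply Filter.Tendsto.inv_tendsto_nhdsGT_zero
      rw [tendsto_nhdsWithin_iff]
      constructor
      · have : Tendsto (fun z : ℂ => ‖z‖) (𝓝 (-((0:ℕ):ℂ))) (𝓝 ‖(-((0:ℕ):ℂ))‖) :=
          (continuous_norm).continuousAt
        simpa using this.mono_left nhdsWithin_le_nhds
      · filter_upwards [self_mem_nhdsWithin] with z hz
        simp only [Set.mem_Ioi, norm_pos_iff]
        simpa using hz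
    have t2 : Tendsto (fun z : ℂ => ‖Complex.Gamma (z + 1)‖) (𝓝[≠] (-((0:ℕ):ℂ))) (𝓝 1) := by
      have hd : ContinuousAt Complex.Gamma (1:ℂ) :=
        continuousAt_Gamma' (ne_neg_nat_of_re_pos (by norm_num))
      have h1 : Tendsto (fun z : ℂ => Complex.Gamma (z + 1)) (𝓝 (-((0:ℕ):ℂ))) (𝓝 (Complex.Gamma 1)) := by
        refine Filter.Tendsto.comp hd ?_
        have : Tendsto (fun z : ℂ => z + 1) (𝓝 (-((0:ℕ):ℂ))) (𝓝 ((-((0:ℕ):ℂ)) + 1)) :=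
          (continuous_id.add continuous_const).continuousAt
        simpa using this
      have h2 : Tendsto (fun z : ℂ => Complex.Gamma (z + 1)) (𝓝[≠] (-((0:ℕ):ℂ))) (𝓝 (Complex.Gamma 1)) :=
        h1.mono_left nhdsWithin_le_nhds
      simpa [Complex.Gamma_one] using h2.norm
    exact Tendsto.congr' hev (t1.atTop_mul_pos one_pos t2)
  | succ m ih =>
    have hpt : (-((m+1:ℕ)):ℂ) + 1 = -(m:ℂ) := by push_cast; ring
    have hev : ∀ᶠ z : ℂ in 𝓝[≠] (-((m+1:ℕ)) : ℂ), ‖Complex.Gamma (z + 1)‖ * ‖z‖⁻¹ = ‖Complex.Gamma z‖ := by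
      have hne : {z : ℂ | z ≠ 0} ∈ 𝓝[≠] (-((m+1:ℕ)) : ℂ) := by
        apply nhdsWithin_le_nhds
        apply isOpen_ne.mem_nhds
        intro h
        have h2 := congrArg Complex.re h
        push_cast at h2
        simp only [neg_re, add_re, natCast_re, one_re, zero_re] at h2
        have : (0:ℝ) ≤ (m:ℝ) := m.cast_nonneg
        linarith
      filter_upwards [hne] with z hz
      rw [Complex.Gamma_add_one z hz, norm_mul, mul_comm ‖z‖, mul_assoc,
        mul_inv_cancel₀ (by simpa using hz), mul_one]
    have t1 : Tendsto (fun z : ℂ => ‖Complex.Gamma (z + 1)‖) (𝓝[≠] (-((m+1:ℕ)):ℂ)) atTop := by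
      refine ih.comp ?_
      rw [tendsto_nhdsWithin_iff]
      constructor
      · have h3 : Tendsto (fun z : ℂ => z + 1) (𝓝 (-((m+1:ℕ)):ℂ)) (𝓝 ((-((m+1:ℕ)):ℂ) + 1)) :=
          (continuous_id.add continuous_const).continuousAt
        rw [hpt] at h3
        exact h3.mono_left nhdsWithin_le_nhds
      · filter_upwards [self_mem_nhdsWithin] with z hz
        simp only [Set.mem_compl_iff, Set.mem_singleton_iff]
        intro h
        apply hz
        simp only [Set.mem_singleton_iff]
        have : z = -(m:ℂ) - 1 := by linear_combination h
        rw [this]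
        push_cast
        ring
    have t2 : Tendsto (fun z : ℂ => ‖z‖⁻¹) (𝓝[≠] (-((m+1:ℕ)):ℂ)) (𝓝 (((m:ℝ)+1)⁻¹)) := by
      have hn : ‖(-((m+1:ℕ)):ℂ)‖ = (m:ℝ)+1 := by
        rw [norm_neg, show ((m+1:ℕ):ℂ) = (((m+1:ℕ):ℝ) : ℂ) by push_cast; ring, Complex.norm_real,
          Real.norm_of_nonneg (by positivity)]
        push_cast
        ring
      have h4 : Tendsto (fun z : ℂ => ‖z‖⁻¹) (𝓝 (-((m+1:ℕ)):ℂ)) (𝓝 (‖(-((m+1:ℕ)):ℂ)‖⁻¹)) :=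
        Tendsto.inv₀ continuous_norm.continuousAt (by rw [hn]; positivity)
      rw [hn] at h4
      exact h4.mono_left nhdsWithin_le_nhds
    exact Tendsto.congr' hev (t1.atTop_mul_pos (by positivity) t2)


section helpers
lemma int_mul_ne {N : ℤ} (hN : 3 ≤ N) {d r : ℤ} (h : d * N = r) (h1 : -N < r) (h2 : r < 0) :
    False := by
  rcases le_or_gt d (-1) with hd | hd
  · nlinarith
  · have : 0 ≤ d := by omega
    nlinarith
end helpers


/-- `Γ((s-1)/N)Γ((s-4)/N)/(Γ((s-2)/N)Γ((s-3)/N))` is a rational function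
of `s` if and only if `N = 1` or `N = 2`. -/
theorem stmt_9 (N : ℕ) (hN : 0 < N) :
    (∃ p q : Polynomial ℂ, q ≠ 0 ∧ ∀ s : ℂ,
      (∀ m : ℕ, (s - 1) / N ≠ -(m : ℂ) ∧ (s - 2) / N ≠ -(m : ℂ) ∧
        (s - 3) / N ≠ -(m : ℂ) ∧ (s - 4) / N ≠ -(m : ℂ)) →
      q.eval s ≠ 0 →
      Complex.Gamma ((s - 1) / N) * Complex.Gamma ((s - 4) / N) /
          (Complex.Gamma ((s - 2) / N) * Complex.Gamma ((s - 3) / N))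
        = p.eval s / q.eval s)
    ↔ N = 1 ∨ N = 2 := by
  constructor
  · rintro ⟨p, q, hq, h⟩
    by_contra hcon
    push_neg at hcon
    have hN3 : 3 ≤ N := by omega
    have hNC : ((N : ℂ)) ≠ 0 := Nat.cast_ne_zero.mpr hN.ne'
    have hNR : (0:ℝ) < (N:ℝ) := by exact_mod_cast hN
    have hNZ : (3:ℤ) ≤ (N:ℤ) := by exact_mod_cast hN3
    -- choose m with q.eval (1 - m*N) ≠ 0
    have hfin := Polynomial.finite_setOf_isRoot hq
    have hinj : Function.Injective (fun m : ℕ => (1:ℂ) - m * N) := by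
      intro a b hab
      simp only [sub_right_injective.eq_iff] at hab
      have : (a:ℂ) = b := mul_right_cancel₀ hNC (by linear_combination hab)
      exact_mod_cast this
    obtain ⟨x, hxmem, hxroot⟩ :=
      (Set.infinite_range_of_injective hinj).exists_notMem_finite hfin
    obtain ⟨m, rfl⟩ := hxmem
    set s₀ : ℂ := (1:ℂ) - m * N with hs₀
    have hq0 : q.eval s₀ ≠ 0 := hxroot
    -- sequence approaching s₀ with nonzero imaginary part
    set seq : ℕ → ℂ := fun k => s₀ + ((1/(k+1:ℝ) : ℝ) : ℂ) * Complex.I with hseq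
    have htend : Tendsto seq atTop (𝓝 s₀) := by
      have t0 : Tendsto (fun k : ℕ => ((1/(k+1:ℝ) : ℝ) : ℂ)) atTop (𝓝 ((0:ℝ):ℂ)) :=
        (Complex.continuous_ofReal.tendsto 0).comp tendsto_one_div_add_atTop_nhds_zero_nat
      have t1 : Tendsto (fun k : ℕ => s₀ + ((1/(k+1:ℝ) : ℝ) : ℂ) * Complex.I) atTop
          (𝓝 (s₀ + ((0:ℝ):ℂ) * Complex.I)) :=
        (tendsto_const_nhds (x := s₀) (f := atTop)).add (t0.mul_const Complex.I)
      simpa only [Complex.ofReal_zero, zero_mul, add_zero] using t1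
    have him : ∀ k, (seq k).im = 1/(k+1:ℝ) := by
      intro k
      simp only [hseq, hs₀, Complex.add_im, Complex.sub_im, Complex.mul_im, Complex.one_im,
        Complex.natCast_im, Complex.natCast_re, Complex.ofReal_im, Complex.ofReal_re,
        Complex.I_im, Complex.I_re]
      ring
    have hdivim : ∀ w : ℂ, (w / (N:ℂ)).im = w.im / (N:ℝ) := by
      intro w
      rw [show ((N:ℂ)) = (((N:ℝ)):ℂ) by push_cast; rfl, div_eq_mul_inv, ← Complex.ofReal_inv,
        Complex.mul_im, Complex.ofReal_re, Complex.ofReal_im, mul_zero, zero_add]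
      rw [div_eq_mul_inv]
    have himd : ∀ (k : ℕ) (c : ℂ), c.im = 0 → ((seq k - c)/(N:ℂ)).im ≠ 0 := by
      intro k c hc
      rw [hdivim, Complex.sub_im, hc, sub_zero, him]
      have h1 : (0:ℝ) < 1/(k+1:ℝ) := by positivity
      exact ne_of_gt (div_pos h1 hNR)
    have hcondk : ∀ k, ∀ m' : ℕ, (seq k - 1) / N ≠ -(m' : ℂ) ∧ (seq k - 2) / N ≠ -(m' : ℂ) ∧
        (seq k - 3) / N ≠ -(m' : ℂ) ∧ (seq k - 4) / N ≠ -(m' : ℂ) := by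
      intro k m'
      refine ⟨ne_neg_nat_of_im (himd k 1 (by simp)) m', ne_neg_nat_of_im (himd k 2 (by simp)) m',
        ne_neg_nat_of_im (himd k 3 (by simp)) m', ne_neg_nat_of_im (himd k 4 (by simp)) m'⟩
    have hqtend : Tendsto (fun k => q.eval (seq k)) atTop (𝓝 (q.eval s₀)) :=
      (q.continuous.tendsto s₀).comp htend
    have hqk : ∀ᶠ k in atTop, q.eval (seq k) ≠ 0 := hqtend.eventually_ne hq0
    -- cross-multiplied identity
    have heq : ∀ᶠ k in atTop,
        Complex.Gamma ((seq k - 1) / N) * Complex.Gamma ((seq k - 4) / N) * q.eval (seq k)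
          = p.eval (seq k) * (Complex.Gamma ((seq k - 2) / N) * Complex.Gamma ((seq k - 3) / N)) := by
      filter_upwards [hqk] with k hk
      have hbc : Complex.Gamma ((seq k - 2) / N) * Complex.Gamma ((seq k - 3) / N) ≠ 0 :=
        mul_ne_zero (Complex.Gamma_ne_zero fun m' => (hcondk k m').2.1)
          (Complex.Gamma_ne_zero fun m' => (hcondk k m').2.2.1)
      exact (div_eq_div_iff hbc hk).mp (h (seq k) (hcondk k) hk)
    -- key arithmetic fact
    have key : ∀ (j k' : ℕ), (s₀ - (j:ℂ))/(N:ℂ) = -(k':ℂ) → ∃ d : ℤ, d * (N:ℤ) = 1 - (j:ℤ) := by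
      intro j k' hj
      rw [div_eq_iff hNC, hs₀] at hj
      have hj' : (1:ℂ) + (k':ℕ) * (N:ℕ) = (m:ℕ) * (N:ℕ) + (j:ℕ) := by
        linear_combination hj
      have h3 : 1 + k' * N = m * N + j := by exact_mod_cast hj'
      refine ⟨(m:ℤ) - k', ?_⟩
      have h4 : (1:ℤ) + k' * N = m * N + j := by exact_mod_cast h3
      linear_combination (-1 : ℤ) * h4
    have hb₀ : ∀ k' : ℕ, (s₀ - 2)/(N:ℂ) ≠ -(k':ℂ) := by
      intro k' hk'
      obtain ⟨d, hd⟩ := key 2 k' (by exact_mod_cast hk')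
      exact int_mul_ne hNZ hd (by omega) (by norm_num)
    have hc₀ : ∀ k' : ℕ, (s₀ - 3)/(N:ℂ) ≠ -(k':ℂ) := by
      intro k' hk'
      obtain ⟨d, hd⟩ := key 3 k' (by exact_mod_cast hk')
      exact int_mul_ne hNZ hd (by omega) (by norm_num)
    -- tendsto of the b and c Gamma factors
    have hbk : Tendsto (fun k => Complex.Gamma ((seq k - 2)/N)) atTop
        (𝓝 (Complex.Gamma ((s₀ - 2)/N))) :=
      ((continuousAt_Gamma' hb₀).tendsto).comp ((htend.sub tendsto_const_nhds).div_const (N:ℂ))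
    have hck : Tendsto (fun k => Complex.Gamma ((seq k - 3)/N)) atTop
        (𝓝 (Complex.Gamma ((s₀ - 3)/N))) :=
      ((continuousAt_Gamma' hc₀).tendsto).comp ((htend.sub tendsto_const_nhds).div_const (N:ℂ))
    have hptend : Tendsto (fun k => p.eval (seq k)) atTop (𝓝 (p.eval s₀)) :=
      (p.continuous.tendsto s₀).comp htend
    have hRHS : Tendsto (fun k => p.eval (seq k) *
        (Complex.Gamma ((seq k - 2)/N) * Complex.Gamma ((seq k - 3)/N))) atTop
        (𝓝 (p.eval s₀ * (Complex.Gamma ((s₀ - 2)/N) * Complex.Gamma ((s₀ - 3)/N)))) :=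
      hptend.mul (hbk.mul hck)
    -- the a-factor blows up
    have haval : (s₀ - 1)/(N:ℂ) = -(m:ℂ) := by
      rw [hs₀, div_eq_iff hNC]; ring
    have hak : Tendsto (fun k => (seq k - 1)/(N:ℂ)) atTop (𝓝[≠] (-(m:ℂ))) := by
      rw [tendsto_nhdsWithin_iff]
      constructor
      · have := (htend.sub (tendsto_const_nhds (x := (1:ℂ)))).div_const (N:ℂ)
        rwa [haval] at this
      · filter_upwards with k
        exact ne_neg_nat_of_im (himd k 1 (by simp)) m
    have hnorma : Tendsto (fun k => ‖Complex.Gamma ((seq k - 1)/N)‖) atTop atTop :=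
      (gamma_norm_tendsto m).comp hak
    -- LHS norm blows up (two cases)
    have hLHSnorm : Tendsto (fun k => ‖Complex.Gamma ((seq k - 1) / N) *
        Complex.Gamma ((seq k - 4) / N) * q.eval (seq k)‖) atTop atTop := by
      rcases Nat.lt_or_ge N 4 with h4 | h4
      · -- N = 3
        have hN3' : N = 3 := by omega
        subst hN3'
        have hdval : (s₀ - 4)/((3:ℕ):ℂ) = -(((m+1:ℕ)):ℂ) := by
          rw [hs₀, div_eq_iff hNC]
          push_cast
          ring
        have hdk : Tendsto (fun k => (seq k - 4)/((3:ℕ):ℂ)) atTop (𝓝[≠] (-(((m+1:ℕ)):ℂ))) := by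
          rw [tendsto_nhdsWithin_iff]
          constructor
          · have := (htend.sub (tendsto_const_nhds (x := (4:ℂ)))).div_const (((3:ℕ)):ℂ)
            rwa [hdval] at this
          · filter_upwards with k
            exact ne_neg_nat_of_im (himd k 4 (by simp)) (m+1)
        have hnormd : Tendsto (fun k => ‖Complex.Gamma ((seq k - 4)/((3:ℕ):ℂ))‖) atTop atTop :=
          (gamma_norm_tendsto (m+1)).comp hdk
        have hqn : Tendsto (fun k => ‖q.eval (seq k)‖) atTop (𝓝 ‖q.eval s₀‖) := hqtend.norm
        have hpos : (0:ℝ) < ‖q.eval s₀‖ := norm_pos_iff.mpr hq0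
        have := hnorma.atTop_mul_atTop₀ (hnormd.atTop_mul_pos hpos hqn)
        refine this.congr fun k => ?_
        simp [norm_mul, mul_assoc]
      · -- N ≥ 4
        have hd₀ : ∀ k' : ℕ, (s₀ - 4)/(N:ℂ) ≠ -(k':ℂ) := by
          intro k' hk'
          obtain ⟨d, hd⟩ := key 4 k' (by exact_mod_cast hk')
          have hN4 : (4:ℤ) ≤ (N:ℤ) := by exact_mod_cast h4
          exact int_mul_ne hNZ hd (by omega) (by norm_num)
        have hdk : Tendsto (fun k => Complex.Gamma ((seq k - 4)/N)) atTop
            (𝓝 (Complex.Gamma ((s₀ - 4)/N))) :=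
          ((continuousAt_Gamma' hd₀).tendsto).comp ((htend.sub tendsto_const_nhds).div_const (N:ℂ))
        have hdq : Tendsto (fun k => ‖Complex.Gamma ((seq k - 4)/N) * q.eval (seq k)‖) atTop
            (𝓝 ‖Complex.Gamma ((s₀ - 4)/N) * q.eval s₀‖) := (hdk.mul hqtend).norm
        have hpos : (0:ℝ) < ‖Complex.Gamma ((s₀ - 4)/N) * q.eval s₀‖ :=
          norm_pos_iff.mpr (mul_ne_zero (Complex.Gamma_ne_zero hd₀) hq0)
        have := hnorma.atTop_mul_pos hpos hdq
        refine this.congr fun k => ?_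
        simp [norm_mul, mul_assoc]
    -- contradiction
    have hRHSnorm : Tendsto (fun k => ‖p.eval (seq k) *
        (Complex.Gamma ((seq k - 2)/N) * Complex.Gamma ((seq k - 3)/N))‖) atTop atTop := by
      refine hLHSnorm.congr' ?_
      filter_upwards [heq] with k hk
      rw [hk]
    exact not_tendsto_nhds_of_tendsto_atTop hRHSnorm _ hRHS.norm
  · rintro (rfl | rfl)
    · refine ⟨Polynomial.X - Polynomial.C 2, Polynomial.X - Polynomial.C 4,
        Polynomial.X_sub_C_ne_zero 4, fun s hcond hqe => ?_⟩
      simp only [Polynomial.eval_sub, Polynomial.eval_X, Polynomial.eval_C] at hqe ⊢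
      simp only [Nat.cast_one, div_one] at hcond ⊢
      have h2 : s - 2 ≠ 0 := by simpa using (hcond 0).2.1
      have h4 : s - 4 ≠ 0 := by simpa using (hcond 0).2.2.2
      have G2 : Complex.Gamma (s - 2) ≠ 0 := Complex.Gamma_ne_zero fun m => (hcond m).2.1
      have G4 : Complex.Gamma (s - 4) ≠ 0 := Complex.Gamma_ne_zero fun m => (hcond m).2.2.2
      rw [show s - 1 = (s - 2) + 1 by ring, Complex.Gamma_add_one _ h2,
        show s - 3 = (s - 4) + 1 by ring, Complex.Gamma_add_one _ h4]
      field_simp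
    · refine ⟨Polynomial.X - Polynomial.C 3, Polynomial.X - Polynomial.C 4,
        Polynomial.X_sub_C_ne_zero 4, fun s hcond hqe => ?_⟩
      simp only [Polynomial.eval_sub, Polynomial.eval_X, Polynomial.eval_C] at hqe ⊢
      have hc2 : ((2:ℕ):ℂ) = (2:ℂ) := by norm_num
      rw [hc2]
      simp only [hc2] at hcond
      have h3 : (s - 3)/2 ≠ 0 := by simpa using (hcond 0).2.2.1
      have h4 : (s - 4)/2 ≠ 0 := by simpa using (hcond 0).2.2.2
      have h4' : s - 4 ≠ 0 := fun h => h4 (by rw [h]; simp)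
      have G3 : Complex.Gamma ((s - 3)/2) ≠ 0 := Complex.Gamma_ne_zero fun m => (hcond m).2.2.1
      have G4 : Complex.Gamma ((s - 4)/2) ≠ 0 := Complex.Gamma_ne_zero fun m => (hcond m).2.2.2
      rw [show (s - 1)/2 = (s - 3)/2 + 1 by ring, Complex.Gamma_add_one _ h3,
        show (s - 2)/2 = (s - 4)/2 + 1 by ring, Complex.Gamma_add_one _ h4]
      field_simp
end

section
/- For every integer r ≥ 2 and positive integer N, the infinite product ∏_{k=0}^∞ ∏_{ℓ=0}^r (s + kN - ℓ)^{(-1)^{r-ℓ+1} C(r,ℓ)} converges to ∏_{ℓ=0}^r Γ((s-ℓ)/N)^{(-1)^{r-ℓ} C(r,ℓ)} for complex s avoiding poles. -/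
open Filter Finset Complex

private lemma alt_sum_zero (r : ℕ) (hr : 1 ≤ r) :
    ∑ ℓ ∈ Finset.range (r + 1), (-1 : ℤ) ^ ℓ * (r.choose ℓ) = 0 := by
  have := Int.alternating_sum_range_choose (n := r)
  rwa [if_neg (by omega)] at this

private lemma alt_sum_mul_zero (r : ℕ) (hr : 2 ≤ r) :
    ∑ ℓ ∈ Finset.range (r + 1), (-1 : ℤ) ^ ℓ * ℓ * (r.choose ℓ) = 0 := by
  obtain ⟨m, rfl⟩ : ∃ m, r = m + 1 := ⟨r - 1, by omega⟩
  rw [Finset.sum_range_succ']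
  have key : ∀ k, (((m + 1).choose (k + 1) : ℤ)) * (k + 1) = (m + 1) * (m.choose k) := by
    intro k
    exact_mod_cast congrArg (Nat.cast : ℕ → ℤ) (Nat.add_one_mul_choose_eq m k).symm
  have hterm : ∀ k, (-1 : ℤ) ^ (k + 1) * (k + 1) * ((m + 1).choose (k + 1))
      = (-(m + 1)) * ((-1) ^ k * (m.choose k)) := by
    intro k
    have : (-1 : ℤ) ^ (k + 1) * (k + 1) * ((m + 1).choose (k + 1))
        = (-1 : ℤ) ^ (k + 1) * ((((m + 1).choose (k + 1) : ℤ)) * (k + 1)) := by ring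
    rw [this, key k, pow_succ]
    ring
  have : ∑ k ∈ Finset.range (m + 1),
      (-1 : ℤ) ^ (k + 1) * (k + 1) * ((m + 1).choose (k + 1))
      = (-(m + 1)) * ∑ k ∈ Finset.range (m + 1), (-1 : ℤ) ^ k * (m.choose k) := by
    rw [Finset.mul_sum]
    exact Finset.sum_congr rfl fun k _ => hterm k
  push_cast at this ⊢
  rw [this, alt_sum_zero m (by omega)]
  simp

private lemma neg_one_pow_sub_int (r ℓ : ℕ) (h : ℓ ≤ r) :
    (-1 : ℤ) ^ (r - ℓ) = (-1) ^ r * (-1) ^ ℓ := by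
  have h2 : ((-1 : ℤ) ^ ℓ) * ((-1 : ℤ) ^ ℓ) = 1 := by
    rw [← pow_add]
    exact Even.neg_one_pow ⟨ℓ, rfl⟩
  calc (-1 : ℤ) ^ (r - ℓ) = (-1 : ℤ) ^ (r - ℓ) * (((-1 : ℤ) ^ ℓ) * ((-1 : ℤ) ^ ℓ)) := by
        rw [h2, mul_one]
    _ = ((-1 : ℤ) ^ (r - ℓ) * (-1 : ℤ) ^ ℓ) * (-1 : ℤ) ^ ℓ := by ring
    _ = (-1) ^ r * (-1) ^ ℓ := by rw [← pow_add, Nat.sub_add_cancel h]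

private lemma prod_zpow_const {α : Type*} (s : Finset α) (b : ℂ) (hb : b ≠ 0) (f : α → ℤ) :
    ∏ i ∈ s, b ^ f i = b ^ (∑ i ∈ s, f i) := by
  induction s using Finset.cons_induction with
  | empty => simp
  | cons a t ha ih => rw [Finset.prod_cons, Finset.sum_cons, ih, zpow_add₀ hb]

private lemma prod_cpow_const {α : Type*} (s : Finset α) (b : ℂ) (hb : b ≠ 0) (f : α → ℂ) :
    ∏ i ∈ s, b ^ f i = b ^ (∑ i ∈ s, f i) := by
  induction s using Finset.cons_induction with
  | empty => simp
  | cons a t ha ih => rw [Finset.prod_cons, Finset.sum_cons, ih, Complex.cpow_add _ _ hb]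

private lemma cpow_zpow_aux (b : ℂ) (hb : b ≠ 0) (y : ℂ) (n : ℤ) :
    (b ^ y) ^ n = b ^ ((n : ℂ) * y) := by
  rw [Complex.cpow_def_of_ne_zero hb, Complex.cpow_def_of_ne_zero hb, ← Complex.exp_int_mul]
  congr 1
  ring

/-- for `r ≥ 2` and `N ≥ 1`, the infinite product
`∏_{k=0}^∞ ∏_{ℓ=0}^r (s + kN - ℓ)^{(-1)^{r-ℓ+1} C(r,ℓ)}` converges to
`∏_{ℓ=0}^r Γ((s-ℓ)/N)^{(-1)^{r-ℓ} C(r,ℓ)}`. -/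
theorem stmt_16 (r : ℕ) (hr : 2 ≤ r) (N : ℕ) (hN : 0 < N) (s : ℂ)
    (hs : ∀ k : ℕ, ∀ ℓ : ℕ, ℓ ≤ r → s + k * N - ℓ ≠ 0) :
    Tendsto (fun K : ℕ => ∏ k ∈ Finset.range (K + 1), ∏ ℓ ∈ Finset.range (r + 1),
        (s + k * N - ℓ) ^ ((-1 : ℤ) ^ (r - ℓ + 1) * (r.choose ℓ)))
      atTop
      (nhds (∏ ℓ ∈ Finset.range (r + 1),
        Complex.Gamma ((s - ℓ) / N) ^ ((-1 : ℤ) ^ (r - ℓ) * (r.choose ℓ)))) := by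
  have hNC : (N : ℂ) ≠ 0 := Nat.cast_ne_zero.mpr hN.ne'
  set z : ℕ → ℂ := fun ℓ => (s - ℓ) / N with hz
  set c : ℕ → ℤ := fun ℓ => (-1 : ℤ) ^ (r - ℓ + 1) * (r.choose ℓ) with hc
  set d : ℕ → ℤ := fun ℓ => (-1 : ℤ) ^ (r - ℓ) * (r.choose ℓ) with hd
  have hdc : ∀ ℓ, d ℓ = - c ℓ := by
    intro ℓ
    simp only [hc, hd, pow_succ]
    ring_nf
  have hfac : ∀ k ℓ : ℕ, s + k * N - ℓ = N * (z ℓ + k) := by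
    intro k ℓ
    simp only [hz]
    field_simp
    ring
  have hzk : ∀ ℓ, ℓ ≤ r → ∀ k : ℕ, z ℓ + k ≠ 0 := by
    intro ℓ hℓ k h
    exact hs k ℓ hℓ (by rw [hfac k ℓ, h, mul_zero])
  have hGne : ∀ ℓ, ℓ ≤ r → Complex.Gamma (z ℓ) ≠ 0 := by
    intro ℓ hℓ
    refine Complex.Gamma_ne_zero fun m h => hzk ℓ hℓ m ?_
    rw [h]
    ring
  -- sums of coefficients vanish
  have hsumc : ∑ ℓ ∈ Finset.range (r + 1), c ℓ = 0 := by
    have : ∀ ℓ ∈ Finset.range (r + 1),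
        c ℓ = ((-1 : ℤ) ^ (r + 1)) * ((-1) ^ ℓ * (r.choose ℓ)) := by
      intro ℓ hℓ
      have hℓr : ℓ ≤ r := Nat.lt_succ_iff.mp (Finset.mem_range.mp hℓ)
      simp only [hc, pow_succ, neg_one_pow_sub_int r ℓ hℓr]
      ring
    rw [Finset.sum_congr rfl this, ← Finset.mul_sum, alt_sum_zero r (by omega), mul_zero]
  have hsumcl : ∑ ℓ ∈ Finset.range (r + 1), c ℓ * ℓ = 0 := by
    have : ∀ ℓ ∈ Finset.range (r + 1),
        c ℓ * ℓ = ((-1 : ℤ) ^ (r + 1)) * ((-1) ^ ℓ * ℓ * (r.choose ℓ)) := by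
      intro ℓ hℓ
      have hℓr : ℓ ≤ r := Nat.lt_succ_iff.mp (Finset.mem_range.mp hℓ)
      simp only [hc, pow_succ, neg_one_pow_sub_int r ℓ hℓr]
      ring
    rw [Finset.sum_congr rfl this, ← Finset.mul_sum, alt_sum_mul_zero r hr, mul_zero]
  -- complex versions
  have hsumcC : ∑ ℓ ∈ Finset.range (r + 1), (c ℓ : ℂ) = 0 := by
    exact_mod_cast congrArg (Int.cast : ℤ → ℂ) hsumc
  have hsumclC : ∑ ℓ ∈ Finset.range (r + 1), (c ℓ : ℂ) * ℓ = 0 := by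
    have := congrArg (Int.cast : ℤ → ℂ) hsumcl
    push_cast at this
    simpa using this
  have hsumcz : ∑ ℓ ∈ Finset.range (r + 1), (c ℓ : ℂ) * z ℓ = 0 := by
    have : ∀ ℓ ∈ Finset.range (r + 1),
        (c ℓ : ℂ) * z ℓ = (c ℓ : ℂ) * (s / N) - ((c ℓ : ℂ) * ℓ) * (1 / N) := by
      intro ℓ _
      simp only [hz]
      ring
    rw [Finset.sum_congr rfl this, Finset.sum_sub_distrib, ← Finset.sum_mul, ← Finset.sum_mul,
      hsumcC, hsumclC, zero_mul, zero_mul, sub_zero]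
  -- convergence of the GammaSeq products
  have hlim : Tendsto (fun K : ℕ => ∏ ℓ ∈ Finset.range (r + 1),
      Complex.GammaSeq (z ℓ) K ^ (d ℓ)) atTop
      (nhds (∏ ℓ ∈ Finset.range (r + 1), Complex.Gamma (z ℓ) ^ (d ℓ))) := by
    refine tendsto_finset_prod _ fun ℓ hℓ => ?_
    have hℓr : ℓ ≤ r := Nat.lt_succ_iff.mp (Finset.mem_range.mp hℓ)
    exact ((continuousAt_zpow₀ _ _ (Or.inl (hGne ℓ hℓr))).tendsto).comp
      (Complex.GammaSeq_tendsto_Gamma (z ℓ))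
  refine hlim.congr' ?_
  filter_upwards [eventually_ge_atTop 1] with K hK
  have hKC : ((K : ℂ)) ≠ 0 := Nat.cast_ne_zero.mpr (by omega)
  have hfactC : ((K.factorial : ℂ)) ≠ 0 := Nat.cast_ne_zero.mpr (Nat.factorial_pos K).ne'
  have hKz : ∀ ℓ, ((K : ℂ) ^ (z ℓ)) ≠ 0 := by
    intro ℓ
    simp [Complex.cpow_eq_zero_iff, hKC]
  have hP : ∀ ℓ, ℓ ≤ r → (∏ j ∈ Finset.range (K + 1), (z ℓ + j)) ≠ 0 := by
    intro ℓ hℓ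
    exact Finset.prod_ne_zero_iff.mpr fun j _ => hzk ℓ hℓ j
  have hGS : ∀ ℓ, ℓ ≤ r → Complex.GammaSeq (z ℓ) K ≠ 0 := by
    intro ℓ hℓ
    rw [Complex.GammaSeq]
    exact div_ne_zero (mul_ne_zero (hKz ℓ) hfactC) (hP ℓ hℓ)
  -- the main algebraic identity for the partial products
  rw [Finset.prod_comm]
  have hstep : ∀ ℓ ∈ Finset.range (r + 1),
      (∏ k ∈ Finset.range (K + 1), (s + k * N - ℓ) ^ ((-1 : ℤ) ^ (r - ℓ + 1) * (r.choose ℓ)))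
      = ((N : ℂ) ^ (K + 1) * (K.factorial : ℂ)) ^ (c ℓ)
        * ((K : ℂ) ^ ((c ℓ : ℂ) * z ℓ))
        * (Complex.GammaSeq (z ℓ) K) ^ (d ℓ) := by
    intro ℓ hℓ
    have hℓr : ℓ ≤ r := Nat.lt_succ_iff.mp (Finset.mem_range.mp hℓ)
    have h1 : (∏ k ∈ Finset.range (K + 1), (s + k * N - ℓ))
        = (N : ℂ) ^ (K + 1) * ∏ k ∈ Finset.range (K + 1), (z ℓ + k) := by
      calc (∏ k ∈ Finset.range (K + 1), (s + k * N - ℓ))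
          = ∏ k ∈ Finset.range (K + 1), (N : ℂ) * (z ℓ + k) :=
            Finset.prod_congr rfl fun k _ => hfac k ℓ
        _ = (N : ℂ) ^ (K + 1) * ∏ k ∈ Finset.range (K + 1), (z ℓ + k) := by
            rw [Finset.prod_mul_distrib, Finset.prod_const, Finset.card_range]
    have h2 : (∏ j ∈ Finset.range (K + 1), (z ℓ + j))
        = (K : ℂ) ^ (z ℓ) * (K.factorial : ℂ) / Complex.GammaSeq (z ℓ) K := by
      rw [Complex.GammaSeq]
      field_simp [hP ℓ hℓr]
      exact (div_self (hKz ℓ)).symm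
    calc (∏ k ∈ Finset.range (K + 1), (s + k * N - ℓ) ^ ((-1 : ℤ) ^ (r - ℓ + 1) * (r.choose ℓ)))
        = (∏ k ∈ Finset.range (K + 1), (s + k * N - ℓ)) ^ (c ℓ) := by
          exact Finset.prod_zpow _ _ _
      _ = ((N : ℂ) ^ (K + 1) * (K.factorial : ℂ) * ((K : ℂ) ^ (z ℓ))
            / Complex.GammaSeq (z ℓ) K) ^ (c ℓ) := by
          rw [h1, h2]
          ring_nf
      _ = ((N : ℂ) ^ (K + 1) * (K.factorial : ℂ)) ^ (c ℓ)
            * ((K : ℂ) ^ (z ℓ)) ^ (c ℓ) * (Complex.GammaSeq (z ℓ) K) ^ (- c ℓ) := by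
          rw [div_zpow, mul_zpow, zpow_neg, div_eq_mul_inv]
      _ = ((N : ℂ) ^ (K + 1) * (K.factorial : ℂ)) ^ (c ℓ)
            * ((K : ℂ) ^ ((c ℓ : ℂ) * z ℓ)) * (Complex.GammaSeq (z ℓ) K) ^ (d ℓ) := by
          rw [cpow_zpow_aux _ hKC, hdc ℓ]
  rw [Finset.prod_congr rfl hstep]
  rw [Finset.prod_mul_distrib, Finset.prod_mul_distrib]
  rw [prod_zpow_const _ _ (mul_ne_zero (pow_ne_zero _ hNC) hfactC),
    prod_cpow_const _ _ hKC, hsumc, hsumcz, zpow_zero, Complex.cpow_zero, one_mul, one_mul]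
end

section
/- For every integer r ≥ 1, the polynomial identity x(x-1)^{r-1} = (x-1)^r/(1 - x^{-1}) holds, and consequently ∏_{k=0}^∞ ζ_{G_m^r/F_1}(s+k) = ζ_{G_m^{r-1}/F_1}(s-1) for r ≥ 2, where ζ_{G_m^r/F_1}(s) = ∏_{ℓ=0}^r (s-ℓ)^{(-1)^{r-ℓ+1} C(r,ℓ)}. -/
open Filter Finset Complex

private def Ee (r ℓ : ℕ) : ℤ := (-1) ^ (r + ℓ + 1) * (r.choose ℓ)

private noncomputable def Gg (r : ℕ) (s : ℂ) : ℂ := ∏ ℓ ∈ Finset.range (r + 1), (s - ℓ) ^ Ee r ℓ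

private lemma sign_eq {r ℓ : ℕ} (h : ℓ ≤ r) :
    (-1 : ℤ) ^ (r - ℓ + 1) = (-1) ^ (r + ℓ + 1) := by
  obtain ⟨d, rfl⟩ : ∃ d, r = ℓ + d := ⟨r - ℓ, by omega⟩
  have h1 : ℓ + d - ℓ + 1 = d + 1 := by omega
  have h2 : ℓ + d + ℓ + 1 = (d + 1) + 2 * ℓ := by omega
  rw [h1, h2, pow_add (-1 : ℤ) (d + 1) (2 * ℓ), pow_mul]
  norm_num

private lemma Gg_ne_zero {r : ℕ} {s : ℂ} (hs : ∀ ℓ : ℕ, ℓ ≤ r → s - ℓ ≠ 0) :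
    Gg r s ≠ 0 := by
  refine Finset.prod_ne_zero_iff.mpr fun ℓ hℓ => ?_
  exact zpow_ne_zero _ (hs ℓ (by simpa [Nat.lt_succ_iff] using hℓ))

private lemma Ee_succ_succ (m ℓ : ℕ) : Ee (m + 1) (ℓ + 1) = Ee m ℓ - Ee m (ℓ + 1) := by
  simp only [Ee, Nat.choose_succ_succ]
  push_cast
  rw [show m + 1 + (ℓ + 1) + 1 = (m + ℓ + 1) + 2 by omega,
    show m + (ℓ + 1) + 1 = (m + ℓ + 1) + 1 by omega, pow_succ, pow_succ, pow_succ]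
  ring

private lemma key {m : ℕ} {s : ℂ} (hs : ∀ ℓ : ℕ, ℓ ≤ m + 1 → s - ℓ ≠ 0) :
    Gg (m + 1) s * Gg m s = Gg m (s - 1) := by
  have hs0 : s ≠ 0 := by simpa using hs 0 (by omega)
  have hA : ∀ ℓ : ℕ, ℓ ∈ Finset.range (m + 1) → s - (ℓ + 1 : ℕ) ≠ 0 := fun ℓ hℓ =>
    hs (ℓ + 1) (by have := Finset.mem_range.mp hℓ; omega)
  have e1 : Gg (m + 1) s =
      (∏ ℓ ∈ Finset.range (m + 1), (s - ((ℓ : ℂ) + 1)) ^ Ee (m + 1) (ℓ + 1)) * s ^ Ee (m + 1) 0 := by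
    rw [Gg, Finset.prod_range_succ']
    push_cast
    simp
  have e2 : Gg m s =
      (∏ ℓ ∈ Finset.range (m + 1), (s - ((ℓ : ℂ) + 1)) ^ Ee m (ℓ + 1)) * s ^ Ee m 0 := by
    rw [Gg, Finset.prod_range_succ', Finset.prod_range_succ]
    have : Ee m (m + 1) = 0 := by simp [Ee, Nat.choose_eq_zero_of_lt (Nat.lt_succ_self m)]
    rw [this]
    push_cast
    simp
  have e3 : Gg m (s - 1) = ∏ ℓ ∈ Finset.range (m + 1), (s - ((ℓ : ℂ) + 1)) ^ Ee m ℓ := by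
    rw [Gg]
    refine Finset.prod_congr rfl fun ℓ _ => ?_
    ring_nf
  rw [e1, e2, e3]
  have e4 : ∀ ℓ ∈ Finset.range (m + 1), (s - ((ℓ : ℂ) + 1)) ^ Ee (m + 1) (ℓ + 1)
      = (s - ((ℓ : ℂ) + 1)) ^ Ee m ℓ / (s - ((ℓ : ℂ) + 1)) ^ Ee m (ℓ + 1) := by
    intro ℓ hℓ
    rw [Ee_succ_succ, zpow_sub₀ (by push_cast at hA ⊢; exact hA ℓ hℓ)]
  rw [Finset.prod_congr rfl e4, Finset.prod_div_distrib]
  have hprod : (∏ ℓ ∈ Finset.range (m + 1), (s - ((ℓ : ℂ) + 1)) ^ Ee m (ℓ + 1)) ≠ 0 := by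
    refine Finset.prod_ne_zero_iff.mpr fun ℓ hℓ => ?_
    exact zpow_ne_zero _ (by push_cast at hA ⊢; exact hA ℓ hℓ)
  have hpow : s ^ Ee (m + 1) 0 * s ^ Ee m 0 = 1 := by
    rw [← zpow_add₀ hs0]
    have : Ee (m + 1) 0 + Ee m 0 = 0 := by
      simp only [Ee, Nat.choose_zero_right]
      rw [show m + 1 + 0 + 1 = (m + 0 + 1) + 1 by omega, pow_succ]
      ring
    rw [this, zpow_zero]
  field_simp
  linear_combination (∏ x ∈ Finset.range (m + 1), (s - ((x : ℂ) + 1)) ^ Ee m x) * hpow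

private lemma partial_prod {m : ℕ} {s : ℂ}
    (hs : ∀ k : ℕ, ∀ ℓ : ℕ, ℓ ≤ m + 1 → s + k - ℓ ≠ 0) (K : ℕ) :
    ∏ k ∈ Finset.range (K + 1), Gg (m + 1) (s + k) = Gg m (s - 1) / Gg m (s + K) := by
  have hkey : ∀ k : ℕ, Gg (m + 1) (s + k) = Gg m (s + k - 1) / Gg m (s + k) := by
    intro k
    have h := key (m := m) (s := s + k) (fun ℓ hℓ => hs k ℓ hℓ)
    have hne : Gg m (s + k) ≠ 0 :=
      Gg_ne_zero (fun ℓ hℓ => hs k ℓ (by omega))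
    field_simp
    linear_combination h
  induction K with
  | zero =>
    simp only [zero_add, Finset.prod_range_one, hkey 0]
    norm_num
  | succ K ih =>
    rw [Finset.prod_range_succ, ih, hkey (K + 1)]
    have h1 : s + (↑(K + 1) : ℂ) - 1 = s + K := by push_cast; ring
    have h2 : Gg m (s + K) ≠ 0 := Gg_ne_zero (fun ℓ hℓ => hs K ℓ (by omega))
    have h3 : Gg m (s + ↑(K + 1)) ≠ 0 := Gg_ne_zero (fun ℓ hℓ => hs (K + 1) ℓ (by omega))
    rw [h1]
    field_simp

private lemma tendsto_Gg {m : ℕ} (hm : 1 ≤ m) {s : ℂ}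
    (hs : ∀ k : ℕ, ∀ ℓ : ℕ, ℓ ≤ m → s + k - ℓ ≠ 0) :
    Tendsto (fun K : ℕ => Gg m (s + K)) atTop (nhds 1) := by
  have hne : ∀ K : ℕ, (s + (K : ℂ)) ≠ 0 := fun K => by simpa using hs K 0 (by omega)
  have hinv : Tendsto (fun K : ℕ => (s + K)⁻¹) atTop (nhds 0) := by
    rw [tendsto_zero_iff_norm_tendsto_zero]
    simp only [norm_inv]
    apply Filter.Tendsto.inv_tendsto_atTop
    apply tendsto_atTop_mono (f := fun K : ℕ => (K : ℝ) - ‖s‖)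
    · intro K
      have h1 : ‖(K : ℂ)‖ ≤ ‖s + K‖ + ‖s‖ := by
        have := norm_sub_le (s + (K : ℂ)) s
        simpa using this
      have h2 : ‖(K : ℂ)‖ = (K : ℝ) := by simp
      linarith
    · exact tendsto_atTop_add_const_right _ _ tendsto_natCast_atTop_atTop
  have hsum : ∑ ℓ ∈ Finset.range (m + 1), Ee m ℓ = 0 := by
    have h := Int.alternating_sum_range_choose (n := m)
    have hm0 : m ≠ 0 := by omega
    rw [if_neg hm0] at h
    calc ∑ ℓ ∈ Finset.range (m + 1), Ee m ℓ
        = (-1) ^ (m + 1) * ∑ ℓ ∈ Finset.range (m + 1), (-1 : ℤ) ^ ℓ * m.choose ℓ := by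
          rw [Finset.mul_sum]
          refine Finset.sum_congr rfl fun ℓ _ => ?_
          simp only [Ee]
          rw [show m + ℓ + 1 = (m + 1) + ℓ by omega, pow_add]
          ring
      _ = 0 := by rw [h, mul_zero]
  have heq : ∀ K : ℕ, Gg m (s + K)
      = ∏ ℓ ∈ Finset.range (m + 1), ((s + K - ℓ) / (s + K)) ^ Ee m ℓ := by
    intro K
    have hd : ∀ ℓ ∈ Finset.range (m + 1), ((s + K - ℓ) / (s + K)) ^ Ee m ℓ
        = (s + K - ℓ) ^ Ee m ℓ / (s + K) ^ Ee m ℓ := fun ℓ _ => div_zpow _ _ _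
    rw [Finset.prod_congr rfl hd, Finset.prod_div_distrib]
    have hden : ∏ ℓ ∈ Finset.range (m + 1), (s + (K : ℂ)) ^ Ee m ℓ = 1 := by
      have : ∀ n : ℕ, ∏ ℓ ∈ Finset.range n, (s + (K : ℂ)) ^ Ee m ℓ
          = (s + (K : ℂ)) ^ (∑ ℓ ∈ Finset.range n, Ee m ℓ) := by
        intro n
        induction n with
        | zero => simp
        | succ n ih =>
          rw [Finset.prod_range_succ, Finset.sum_range_succ, ih, zpow_add₀ (hne K)]
      rw [this, hsum, zpow_zero]
    rw [hden, div_one, Gg]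
  refine Tendsto.congr (fun K => (heq K).symm) ?_
  have hlim : (1 : ℂ) = ∏ ℓ ∈ Finset.range (m + 1), (1 : ℂ) ^ Ee m ℓ := by simp
  rw [hlim]
  apply tendsto_finset_prod
  intro ℓ _
  have hbase : Tendsto (fun K : ℕ => (s + K - ℓ) / (s + K)) atTop (nhds 1) := by
    have hrw : ∀ K : ℕ, (s + K - ℓ) / (s + K) = 1 - (ℓ : ℂ) * (s + K)⁻¹ := by
      intro K
      rw [sub_div, div_self (hne K), div_eq_mul_inv]
    refine Tendsto.congr (fun K => (hrw K).symm) ?_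
    have : Tendsto (fun K : ℕ => (ℓ : ℂ) * (s + K)⁻¹) atTop (nhds 0) := by
      simpa using (hinv.const_mul (ℓ : ℂ))
    simpa using (tendsto_const_nhds (x := (1 : ℂ))).sub this
  have hc : ContinuousAt (fun z : ℂ => z ^ Ee m ℓ) 1 :=
    continuousAt_zpow₀ 1 _ (Or.inl one_ne_zero)
  exact hc.tendsto.comp hbase

/-- for `r ≥ 1`, `x(x-1)^{r-1} = (x-1)^r/(1 - x⁻¹)`, and consequently,
for `r ≥ 2`, `∏_{k=0}^∞ ζ_{G_m^r/F_1}(s+k) = ζ_{G_m^{r-1}/F_1}(s-1)` where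
`ζ_{G_m^r/F_1}(s) = ∏_{ℓ=0}^r (s-ℓ)^{(-1)^{r-ℓ+1} C(r,ℓ)}`. -/
theorem stmt_17 (r : ℕ) (hr : 1 ≤ r) :
    (∀ x : ℂ, x ≠ 0 → x ≠ 1 → x * (x - 1) ^ (r - 1) = (x - 1) ^ r / (1 - x⁻¹))
    ∧ (2 ≤ r → ∀ s : ℂ, (∀ k : ℕ, ∀ ℓ : ℕ, ℓ ≤ r → s + k - ℓ ≠ 0) →
      Tendsto (fun K : ℕ => ∏ k ∈ Finset.range (K + 1), ∏ ℓ ∈ Finset.range (r + 1),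
          (s + k - ℓ) ^ ((-1 : ℤ) ^ (r - ℓ + 1) * (r.choose ℓ)))
        atTop
        (nhds (∏ ℓ ∈ Finset.range ((r - 1) + 1),
          ((s - 1) - ℓ) ^ ((-1 : ℤ) ^ ((r - 1) - ℓ + 1) * ((r - 1).choose ℓ))))) := by
  constructor
  · intro x hx hx1
    obtain ⟨m, rfl⟩ : ∃ m, r = m + 1 := ⟨r - 1, by omega⟩
    have hx1' : x - 1 ≠ 0 := sub_ne_zero.mpr hx1
    have hne : 1 - x⁻¹ ≠ 0 := by
      intro h
      rw [sub_eq_zero] at h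
      exact hx1 (by rwa [eq_comm, inv_eq_one] at h)
    rw [eq_div_iff hne]
    rw [Nat.add_sub_cancel]
    field_simp
    ring
  · intro hr2 s hs
    obtain ⟨m, rfl⟩ : ∃ m, r = m + 1 := ⟨r - 1, by omega⟩
    have hm : 1 ≤ m := by omega
    -- rewrite the goal in terms of Gg
    have hgoalfun : ∀ K : ℕ, (∏ k ∈ Finset.range (K + 1), ∏ ℓ ∈ Finset.range (m + 1 + 1),
          (s + k - ℓ) ^ ((-1 : ℤ) ^ (m + 1 - ℓ + 1) * ((m + 1).choose ℓ)))
        = ∏ k ∈ Finset.range (K + 1), Gg (m + 1) (s + k) := by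
      intro K
      refine Finset.prod_congr rfl fun k _ => ?_
      rw [Gg]
      refine Finset.prod_congr rfl fun ℓ hℓ => ?_
      rw [Ee, sign_eq (by have := Finset.mem_range.mp hℓ; omega)]
    have hgoallim : (∏ ℓ ∈ Finset.range ((m + 1 - 1) + 1),
          ((s - 1) - ℓ) ^ ((-1 : ℤ) ^ ((m + 1 - 1) - ℓ + 1) * ((m + 1 - 1).choose ℓ)))
        = Gg m (s - 1) := by
      rw [Gg]
      simp only [Nat.add_sub_cancel]
      refine Finset.prod_congr rfl fun ℓ hℓ => ?_
      rw [Ee, sign_eq (by have := Finset.mem_range.mp hℓ; omega)]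
    rw [hgoallim]
    refine Tendsto.congr (fun K => (hgoalfun K).symm) ?_
    have hps : ∀ K : ℕ, ∏ k ∈ Finset.range (K + 1), Gg (m + 1) (s + k)
        = Gg m (s - 1) / Gg m (s + K) := partial_prod hs
    refine Tendsto.congr (fun K => (hps K).symm) ?_
    have hT : Tendsto (fun K : ℕ => Gg m (s - 1) / Gg m (s + K)) atTop
        (nhds (Gg m (s - 1) / 1)) := by
      exact Tendsto.div tendsto_const_nhds
        (tendsto_Gg hm (fun k ℓ hℓ => hs k ℓ (by omega))) one_ne_zero
    simpa using hT
end

section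
/- The infinite product ∏_{n=1}^∞ ζ_{GL(3)/F_1}(s+n) converges to ζ_{SL(3)/F_1}(s), where ζ_{GL(3)/F_1}(s) = (s-8)(s-7)(s-3)/((s-9)(s-5)(s-4)) and ζ_{SL(3)/F_1}(s) = (s-6)(s-5)/((s-8)(s-3)), for complex s avoiding all poles and zeros of the factors. -/
open Filter Finset

private lemma inv_nat_tendsto : Tendsto (fun K : ℕ => ((K : ℂ))⁻¹) atTop (nhds 0) := by
  have h : Tendsto (fun K : ℕ => ((K : ℝ))⁻¹) atTop (nhds 0) :=
    tendsto_inv_atTop_nhds_zero_nat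
  have := (Complex.continuous_ofReal.tendsto 0).comp h
  refine this.congr fun K => ?_
  simp only [Function.comp_apply]
  push_cast
  ring

private lemma ratio_tendsto (s a b : ℂ) :
    Tendsto (fun K : ℕ => (s + K - a) / (s + K - b)) atTop (nhds 1) := by
  have ha : Tendsto (fun K : ℕ => (s - a) * ((K : ℂ))⁻¹ + 1) atTop (nhds 1) := by
    simpa using (inv_nat_tendsto.const_mul (s - a)).add_const 1
  have hb : Tendsto (fun K : ℕ => (s - b) * ((K : ℂ))⁻¹ + 1) atTop (nhds 1) := by
    simpa using (inv_nat_tendsto.const_mul (s - b)).add_const 1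
  have h := ha.div hb one_ne_zero
  rw [div_one] at h
  refine h.congr' ?_
  filter_upwards [eventually_ge_atTop 1] with K hK
  have hK0 : (K : ℂ) ≠ 0 := by
    exact_mod_cast Nat.cast_ne_zero.mpr (by omega)
  simp only [Pi.div_apply]
  field_simp
  ring

/-- `∏_{n=1}^∞ ζ_{GL(3)/F_1}(s+n)` converges to `ζ_{SL(3)/F_1}(s)`,
where `ζ_{GL(3)/F_1}(s) = (s-8)(s-7)(s-3)/((s-9)(s-5)(s-4))` and
`ζ_{SL(3)/F_1}(s) = (s-6)(s-5)/((s-8)(s-3))`. -/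
theorem stmt_19 (s : ℂ)
    (hs : ∀ n : ℕ, s + n ≠ 3 ∧ s + n ≠ 4 ∧ s + n ≠ 5 ∧
      s + n ≠ 7 ∧ s + n ≠ 8 ∧ s + n ≠ 9) :
    Tendsto (fun K : ℕ => ∏ n ∈ Finset.range K,
        ((s + (n + 1) - 8) * (s + (n + 1) - 7) * (s + (n + 1) - 3) /
          ((s + (n + 1) - 9) * (s + (n + 1) - 5) * (s + (n + 1) - 4))))
      atTop (nhds ((s - 6) * (s - 5) / ((s - 8) * (s - 3)))) := by
  set g : ℕ → ℂ := fun n => (s + n - 6) * (s + n - 5) / ((s + n - 8) * (s + n - 3)) with hg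
  -- nonvanishing facts
  have h6 : ∀ n : ℕ, s + n - 6 ≠ 0 := by
    intro n
    have := (hs (n + 1)).2.2.2.1
    push_cast at this ⊢
    intro h; apply this; linear_combination h
  have h5 : ∀ n : ℕ, s + n - 5 ≠ 0 := fun n => sub_ne_zero.mpr (hs n).2.2.1
  have h8 : ∀ n : ℕ, s + n - 8 ≠ 0 := fun n => sub_ne_zero.mpr (hs n).2.2.2.2.1
  have h3 : ∀ n : ℕ, s + n - 3 ≠ 0 := fun n => sub_ne_zero.mpr (hs n).1
  have h4 : ∀ n : ℕ, s + n - 4 ≠ 0 := fun n => sub_ne_zero.mpr (hs n).2.1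
  have h7 : ∀ n : ℕ, s + n - 7 ≠ 0 := fun n => sub_ne_zero.mpr (hs n).2.2.2.1
  have h2 : ∀ n : ℕ, s + n - 2 ≠ 0 := by
    intro n
    have := (hs (n + 1)).1
    push_cast at this ⊢
    intro h; apply this; linear_combination h
  have hgne : ∀ n, g n ≠ 0 := fun n =>
    div_ne_zero (mul_ne_zero (h6 n) (h5 n)) (mul_ne_zero (h8 n) (h3 n))
  -- telescoping term identity
  have hterm : ∀ n : ℕ,
      (s + (↑n + 1) - 8) * (s + (↑n + 1) - 7) * (s + (↑n + 1) - 3) /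
        ((s + (↑n + 1) - 9) * (s + (↑n + 1) - 5) * (s + (↑n + 1) - 4)) = g n / g (n + 1) := by
    intro n
    have f9 : s + ((n : ℂ) + 1) - 9 ≠ 0 := fun h => h8 n (by linear_combination h)
    have f5 : s + ((n : ℂ) + 1) - 5 ≠ 0 := fun h => h4 n (by linear_combination h)
    have f4 : s + ((n : ℂ) + 1) - 4 ≠ 0 := fun h => h3 n (by linear_combination h)
    have f8 : s + ((n : ℂ) + 1) - 8 ≠ 0 := fun h => h7 n (by linear_combination h)
    have f3 : s + ((n : ℂ) + 1) - 3 ≠ 0 := fun h => h2 n (by linear_combination h)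
    have f6 : s + ((n : ℂ) + 1) - 6 ≠ 0 := fun h => h5 n (by linear_combination h)
    have e8 := h8 n; have e3 := h3 n
    simp only [hg]
    push_cast
    field_simp
    ring
  -- partial products
  have hprod : ∀ K : ℕ, (∏ n ∈ Finset.range K,
      ((s + (↑n + 1) - 8) * (s + (↑n + 1) - 7) * (s + (↑n + 1) - 3) /
        ((s + (↑n + 1) - 9) * (s + (↑n + 1) - 5) * (s + (↑n + 1) - 4)))) = g 0 / g K := by
    intro K
    induction K with
    | zero => simp [div_self (hgne 0)]
    | succ K ih =>
        rw [Finset.prod_range_succ, ih, hterm K]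
        rw [div_mul_div_comm]
        rw [mul_comm (g 0) (g K), mul_div_mul_left _ _ (hgne K)]
  -- limit of g K is 1
  have hglim : Tendsto g atTop (nhds 1) := by
    have h1 := (ratio_tendsto s 6 8).mul (ratio_tendsto s 5 3)
    rw [mul_one] at h1
    refine h1.congr fun K => ?_
    simp only [hg]
    rw [div_mul_div_comm]
  have hlim : Tendsto (fun K => g 0 / g K) atTop (nhds (g 0 / 1)) :=
    tendsto_const_nhds.div hglim one_ne_zero
  rw [div_one] at hlim
  have hg0 : g 0 = (s - 6) * (s - 5) / ((s - 8) * (s - 3)) := by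
    simp [hg]
  rw [← hg0]
  exact hlim.congr fun K => (hprod K).symm
end
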